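/- If every bonding map of a direct sequence is a contractive section, then so is every limit embedding: let (X_n, i_{n,n+1}) be a direct sequence of normed spaces over 𝕜 such that for every n there exists a continuous linear map r_{n,n+1} : X_{n+1} → X_n with ‖r_{n,n+1}‖ ≤ 1 and r_{n,n+1} ∘ i_{n,n+1} = id on X_n, and let (X, (i_n)) be a norm-1 direct limit of the sequence. Then for every n₀ there exists a continuous linear map r_{n₀} : X → X_{n₀} with ‖r_{n₀}‖ ≤ 1 and r_{n₀} ∘ i_{n₀} = id on X_{n₀}. -/
import Mathlib


/-!
STATEMENT 11: If every bonding map of a direct sequence is a contractive section (admits a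
norm-≤-1 continuous linear left inverse), then so is every limit embedding of any norm-1
direct limit of the sequence.
-/

universe u

structure NSpace (𝕜 : Type u) [NontriviallyNormedField 𝕜] where
  carrier : Type u
  [grp : NormedAddCommGroup carrier]
  [mod : NormedSpace 𝕜 carrier]

attribute [instance] NSpace.grp NSpace.mod

variable (𝕜 : Type u) [RCLike 𝕜]

/-- `(L, (i_n))` is a norm-1 direct limit of the direct sequence `(Xs, b)`:
the `i_n` are compatible isometries and every compatible family of maps of norm `≤ 1`
into a normed space `Y` factors uniquely through `L`, the factorization having norm `≤ 1`. -/
def IsDirLimit (Xs : ℕ → NSpace 𝕜)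
    (b : ∀ n : ℕ, (Xs n).carrier →L[𝕜] (Xs (n + 1)).carrier)
    (L : Type u) [NormedAddCommGroup L] [NormedSpace 𝕜 L]
    (i : ∀ n : ℕ, (Xs n).carrier →L[𝕜] L) : Prop :=
  (∀ n, Isometry (i n)) ∧
  (∀ n x, i (n + 1) (b n x) = i n x) ∧
  (∀ (Y : Type u) [NormedAddCommGroup Y] [NormedSpace 𝕜 Y]
      (f : ∀ n : ℕ, (Xs n).carrier →L[𝕜] Y),
      (∀ n, ‖f n‖ ≤ 1) →
      (∀ n x, f (n + 1) (b n x) = f n x) →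
      (∃! F : L →L[𝕜] Y, ∀ n x, F (i n x) = f n x) ∧
        ∀ F : L →L[𝕜] Y, (∀ n x, F (i n x) = f n x) → ‖F‖ ≤ 1)


section Aux

variable {𝕜}
variable (Xs : ℕ → NSpace 𝕜)

/-- Iterated bonding map. -/
noncomputable def auxB (b : ∀ n : ℕ, (Xs n).carrier →L[𝕜] (Xs (n + 1)).carrier)
    {m n : ℕ} (h : m ≤ n) : (Xs m).carrier →L[𝕜] (Xs n).carrier :=
  Nat.leRec (ContinuousLinearMap.id 𝕜 _) (fun {k} _ g => (b k).comp g) h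

/-- Iterated retraction. -/
noncomputable def auxR (r : ∀ n : ℕ, (Xs (n + 1)).carrier →L[𝕜] (Xs n).carrier)
    {m n : ℕ} (h : m ≤ n) : (Xs n).carrier →L[𝕜] (Xs m).carrier :=
  Nat.leRec (ContinuousLinearMap.id 𝕜 _) (fun {k} _ g => g.comp (r k)) h

variable (b : ∀ n : ℕ, (Xs n).carrier →L[𝕜] (Xs (n + 1)).carrier)
variable (r : ∀ n : ℕ, (Xs (n + 1)).carrier →L[𝕜] (Xs n).carrier)

theorem auxB_self {m : ℕ} (h : m ≤ m) (x : (Xs m).carrier) : auxB Xs b h x = x := by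
  simp [auxB]

theorem auxB_succ {m n : ℕ} (h : m ≤ n) (h2 : m ≤ n + 1) (x : (Xs m).carrier) :
    auxB Xs b h2 x = b n (auxB Xs b h x) := by
  unfold auxB
  rw [Nat.leRec_succ _ _ h]
  rfl

theorem auxR_self {m : ℕ} (h : m ≤ m) (x : (Xs m).carrier) : auxR Xs r h x = x := by
  simp [auxR]

theorem auxR_succ {m n : ℕ} (h : m ≤ n) (h2 : m ≤ n + 1) (x : (Xs (n + 1)).carrier) :
    auxR Xs r h2 x = auxR Xs r h (r n x) := by
  unfold auxR
  rw [Nat.leRec_succ _ _ h]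
  rfl

theorem auxB_bot {m n : ℕ} (h : m + 1 ≤ n) (h2 : m ≤ n) (x : (Xs m).carrier) :
    auxB Xs b h (b m x) = auxB Xs b h2 x := by
  induction n, h using Nat.le_induction with
  | base =>
    rw [auxB_self, auxB_succ Xs b (le_refl m) h2, auxB_self]
  | succ n h ih =>
    rw [auxB_succ Xs b h, auxB_succ Xs b (Nat.le_of_succ_le h), ih]

theorem auxB_norm (hb : ∀ n, Isometry (b n)) {m n : ℕ} (h : m ≤ n) :
    ‖auxB Xs b h‖ ≤ 1 := by
  induction n, h using Nat.le_induction with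
  | base => simpa [auxB] using ContinuousLinearMap.norm_id_le
  | succ n h ih =>
    have hbn : ‖b n‖ ≤ 1 := by
      refine ContinuousLinearMap.opNorm_le_bound _ zero_le_one (fun x => ?_)
      rw [(hb n).norm_map_of_map_zero (map_zero _), one_mul]
    have : auxB Xs b (Nat.le_succ_of_le h) = (b n).comp (auxB Xs b h) := by
      ext x; exact auxB_succ Xs b h _ x
    rw [this]
    calc ‖(b n).comp (auxB Xs b h)‖ ≤ ‖b n‖ * ‖auxB Xs b h‖ :=
          ContinuousLinearMap.opNorm_comp_le _ _
      _ ≤ 1 * 1 := mul_le_mul hbn ih (norm_nonneg _) zero_le_one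
      _ = 1 := one_mul 1

theorem auxR_norm (hr : ∀ n, ‖r n‖ ≤ 1) {m n : ℕ} (h : m ≤ n) :
    ‖auxR Xs r h‖ ≤ 1 := by
  induction n, h using Nat.le_induction with
  | base => simpa [auxR] using ContinuousLinearMap.norm_id_le
  | succ n h ih =>
    have : auxR Xs r (Nat.le_succ_of_le h) = (auxR Xs r h).comp (r n) := by
      ext x; exact auxR_succ Xs r h _ x
    rw [this]
    calc ‖(auxR Xs r h).comp (r n)‖ ≤ ‖auxR Xs r h‖ * ‖r n‖ :=
          ContinuousLinearMap.opNorm_comp_le _ _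
      _ ≤ 1 * 1 := mul_le_mul ih (hr n) (norm_nonneg _) zero_le_one
      _ = 1 := one_mul 1

end Aux

theorem dirLimit_embedding_isSection (Xs : ℕ → NSpace 𝕜)
    (b : ∀ n : ℕ, (Xs n).carrier →L[𝕜] (Xs (n + 1)).carrier)
    (hb : ∀ n, Isometry (b n))
    (hsec : ∀ n : ℕ, ∃ r : (Xs (n + 1)).carrier →L[𝕜] (Xs n).carrier,
      ‖r‖ ≤ 1 ∧ ∀ x, r (b n x) = x)
    (L : Type u) [NormedAddCommGroup L] [NormedSpace 𝕜 L]
    (i : ∀ n : ℕ, (Xs n).carrier →L[𝕜] L)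
    (hlim : IsDirLimit 𝕜 Xs b L i) :
    ∀ n₀ : ℕ, ∃ r : L →L[𝕜] (Xs n₀).carrier, ‖r‖ ≤ 1 ∧ ∀ x, r (i n₀ x) = x := by
  choose r hr1 hr2 using hsec
  intro n₀
  -- the compatible family into X n₀
  let f : ∀ n : ℕ, (Xs n).carrier →L[𝕜] (Xs n₀).carrier := fun n =>
    if h : n ≤ n₀ then auxB Xs b h else auxR Xs r (le_of_not_ge h)
  have hfnorm : ∀ n, ‖f n‖ ≤ 1 := by
    intro n
    by_cases h : n ≤ n₀ <;> simp only [f, h, dif_pos, dif_neg, not_true, not_false_iff]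
    · exact auxB_norm Xs b hb h
    · exact auxR_norm Xs r hr1 (le_of_not_ge h)
  have hfcomp : ∀ n x, f (n + 1) (b n x) = f n x := by
    intro n x
    by_cases h : n + 1 ≤ n₀
    · have h' : n ≤ n₀ := Nat.le_of_succ_le h
      simp only [f, dif_pos h, dif_pos h']
      exact auxB_bot Xs b h h' x
    · by_cases h' : n ≤ n₀
      · have : n₀ = n := by omega
        subst this
        simp only [f, dif_neg h, dif_pos h']
        rw [auxR_succ Xs r (le_refl n₀), hr2 n₀ x, auxR_self, auxB_self]
      · simp only [f, dif_neg h, dif_neg h']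
        rw [auxR_succ Xs r (le_of_not_ge h'), hr2 n x]
  obtain ⟨⟨F, hF, -⟩, hnorm⟩ := hlim.2.2 (Xs n₀).carrier f hfnorm hfcomp
  refine ⟨F, hnorm F hF, fun x => ?_⟩
  rw [hF n₀ x]
  simp only [f, dif_pos (le_refl n₀)]
  exact auxB_self Xs b (le_refl n₀) x
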